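/- Let f be a homeomorphism of a compact metric space X semi-conjugate via a continuous surjection π to a minimal homeomorphism τ (π ∘ f = τ ∘ π), and suppose the regular set R_π is nonempty. Then f has a unique minimal set M, and M equals the closure of the orbit of z for every z ∈ R_π, and M equals the closure of R_π. -/

import Mathlib

open Filter Topology

/-- A minimal set of a map `f`: nonempty, closed, invariant, with no proper
nonempty closed invariant subset. -/
def IsMinimalSet {X : Type*} [TopologicalSpace X] (f : X → X) (M : Set X) : Prop :=
  M.Nonempty ∧ IsClosed M ∧ f '' M = M ∧
    ∀ M' ⊆ M, M'.Nonempty → IsClosed M' → f '' M' = M' → M' = M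

/-- Points of an invariant set stay in it under all integer powers. -/
lemma orbit_mem_of_invariant {X : Type*} (g : X ≃ X) {K : Set X}
    (hK : g '' K = K) : ∀ (n : ℤ) (x : X), x ∈ K → (g ^ n) x ∈ K := by
  have hfwd : ∀ x ∈ K, g x ∈ K := fun x hx => hK ▸ ⟨x, hx, rfl⟩
  have hbwd : ∀ x ∈ K, g.symm x ∈ K := by
    intro x hx
    rw [← hK] at hx
    obtain ⟨y, hy, rfl⟩ := hx
    simpa using hy
  intro n
  induction n using Int.induction_on with
  | zero => simpa using fun x hx => hx
  | succ n ih =>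
    intro x hx
    have h : (g ^ ((n : ℤ) + 1)) x = (g ^ (n : ℤ)) (g x) := by
      rw [zpow_add_one]; rfl
    rw [h]; exact ih _ (hfwd x hx)
  | pred n ih =>
    intro x hx
    have h : (g ^ (-(n : ℤ) - 1)) x = (g ^ (-(n : ℤ))) (g.symm x) := by
      rw [zpow_sub_one]; rfl
    rw [h]; exact ih _ (hbwd x hx)

/-- A nonempty closed invariant set of a minimal homeomorphism is everything. -/
lemma closed_invariant_eq_univ {X : Type*} [TopologicalSpace X] (τ : X ≃ₜ X)
    (hτmin : ∀ z : X, Dense {w : X | ∃ n : ℤ, w = (τ.toEquiv ^ n) z})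
    {K : Set X} (hKne : K.Nonempty) (hKcl : IsClosed K)
    (hKinv : τ '' K = K) : K = Set.univ := by
  obtain ⟨x, hx⟩ := hKne
  have hKinv' : τ.toEquiv '' K = K := hKinv
  have horb : {w : X | ∃ n : ℤ, w = (τ.toEquiv ^ n) x} ⊆ K := by
    rintro w ⟨n, rfl⟩
    exact orbit_mem_of_invariant τ.toEquiv hKinv' n x hx
  have : Set.univ ⊆ K := by
    rw [← (hτmin x).closure_eq, ← hKcl.closure_eq]
    exact closure_mono horb
  exact Set.Subset.antisymm (Set.subset_univ K) this

/-- If a homeomorphism `f` of a compact metric space is semi-conjugate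
via a continuous surjection `π` to a minimal homeomorphism `τ`, and the regular set
`R_π` is nonempty, then `f` has a unique minimal set `M`, which equals the closure
of the orbit of any `z ∈ R_π`, and equals the closure of `R_π`. -/
theorem stmt7 {X : Type*} [MetricSpace X] [CompactSpace X]
    (f τ : X ≃ₜ X)
    (hτmin : ∀ z : X, Dense {w : X | ∃ n : ℤ, w = (τ.toEquiv ^ n) z})
    (π : X → X) (hπc : Continuous π) (hπs : Function.Surjective π)
    (hsemi : ∀ z : X, π (f z) = τ (π z))
    (Rπ : Set X) (hRπ : Rπ = {z : X | π ⁻¹' {π z} = {z}}) (hne : Rπ.Nonempty) :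
    ∃ M : Set X, IsMinimalSet ⇑f M ∧
      (∀ M' : Set X, IsMinimalSet ⇑f M' → M' = M) ∧
      (∀ z ∈ Rπ, M = closure {w : X | ∃ n : ℤ, w = (f.toEquiv ^ n) z}) ∧
      M = closure Rπ := by
  have hmem : ∀ z : X, z ∈ Rπ ↔ π ⁻¹' {π z} = {z} := by
    intro z; rw [hRπ]; rfl
  -- inverse semiconjugacy
  have hsemi' : ∀ z : X, π (f.symm z) = τ.symm (π z) := by
    intro z
    have h := hsemi (f.symm z)
    rw [f.apply_symm_apply] at h
    rw [h, τ.symm_apply_apply]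
  -- R is f-invariant
  have hRf : ∀ z ∈ Rπ, f z ∈ Rπ := by
    intro z hz
    rw [hmem] at hz ⊢
    ext u
    simp only [Set.mem_preimage, Set.mem_singleton_iff]
    constructor
    · intro h
      have h1 : π (f.symm u) = π z := by
        rw [hsemi', h, hsemi, τ.symm_apply_apply]
      have h2 : f.symm u ∈ π ⁻¹' {π z} := h1
      rw [hz, Set.mem_singleton_iff] at h2
      have := congrArg f h2
      rwa [f.apply_symm_apply] at this
    · rintro rfl; rfl
  have hRfinv : ∀ z ∈ Rπ, f.symm z ∈ Rπ := by
    intro z hz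
    rw [hmem] at hz ⊢
    ext u
    simp only [Set.mem_preimage, Set.mem_singleton_iff]
    constructor
    · intro h
      have h1 : π (f u) = π z := by rw [hsemi, h, hsemi', τ.apply_symm_apply]
      have h2 : f u ∈ π ⁻¹' {π z} := h1
      rw [hz, Set.mem_singleton_iff] at h2
      have := congrArg f.symm h2
      rwa [f.symm_apply_apply] at this
    · rintro rfl; rfl
  have hRinv : f '' Rπ = Rπ := by
    apply Set.Subset.antisymm
    · rintro _ ⟨z, hz, rfl⟩; exact hRf z hz
    · intro z hz; exact ⟨f.symm z, hRfinv z hz, f.apply_symm_apply z⟩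
  -- key: every nonempty closed invariant set contains Rπ
  have key : ∀ S : Set X, S.Nonempty → IsClosed S → f '' S = S → Rπ ⊆ S := by
    intro S hSne hScl hSinv
    have hπS : τ '' (π '' S) = π '' S := by
      rw [Set.image_image]
      have h : (fun z => τ (π z)) = fun z => π (f z) := funext fun z => (hsemi z).symm
      rw [h, ← Set.image_image, hSinv]
    have hπScl : IsClosed (π '' S) := (hScl.isCompact.image hπc).isClosed
    have huniv : π '' S = Set.univ :=
      closed_invariant_eq_univ τ hτmin (hSne.image π) hπScl hπS
    intro z hz
    have hzu : π z ∈ π '' S := huniv ▸ Set.mem_univ _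
    obtain ⟨w, hw, hwz⟩ := hzu
    have hzfib := (hmem z).mp hz
    have hwm : w ∈ π ⁻¹' {π z} := hwz
    rw [hzfib, Set.mem_singleton_iff] at hwm
    rwa [← hwm]
  -- orbit closures over Rπ are minimal sets
  have hmin : ∀ z ∈ Rπ,
      IsMinimalSet ⇑f (closure {w : X | ∃ n : ℤ, w = (f.toEquiv ^ n) z}) := by
    intro z hz
    set O := {w : X | ∃ n : ℤ, w = (f.toEquiv ^ n) z} with hO
    have hzO : z ∈ O := ⟨0, by simp⟩
    have hOinv : f '' O = O := by
      ext w
      constructor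
      · rintro ⟨u, ⟨n, rfl⟩, rfl⟩
        refine ⟨1 + n, ?_⟩
        rw [zpow_one_add]; rfl
      · rintro ⟨n, rfl⟩
        refine ⟨(f.toEquiv ^ (n - 1)) z, ⟨n - 1, rfl⟩, ?_⟩
        have h := zpow_one_add f.toEquiv (n - 1)
        rw [show (1 : ℤ) + (n - 1) = n by ring] at h
        rw [h]; rfl
    have hClinv : f '' closure O = closure O := by
      rw [f.image_closure, hOinv]
    refine ⟨⟨z, subset_closure hzO⟩, isClosed_closure, hClinv, ?_⟩
    intro M' hM'sub hM'ne hM'cl hM'inv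
    have hzM' : z ∈ M' := key M' hM'ne hM'cl hM'inv hz
    have hM'inv' : f.toEquiv '' M' = M' := hM'inv
    have hOsub : O ⊆ M' := by
      rintro w ⟨n, rfl⟩
      exact orbit_mem_of_invariant f.toEquiv hM'inv' n z hzM'
    exact Set.Subset.antisymm hM'sub (closure_minimal hOsub hM'cl)
  obtain ⟨z0, hz0⟩ := hne
  set O0 := {w : X | ∃ n : ℤ, w = (f.toEquiv ^ n) z0} with hO0
  have hmin0 := hmin z0 hz0
  -- uniqueness
  have huniq : ∀ M' : Set X, IsMinimalSet ⇑f M' → M' = closure O0 := by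
    intro M' hM'
    obtain ⟨hne', hcl', hinv', hminprop'⟩ := hM'
    have hz0M' : z0 ∈ M' := key M' hne' hcl' hinv' hz0
    have hinv'' : f.toEquiv '' M' = M' := hinv'
    have hOsub : O0 ⊆ M' := by
      rintro w ⟨n, rfl⟩
      exact orbit_mem_of_invariant f.toEquiv hinv'' n z0 hz0M'
    exact (hminprop' (closure O0) (closure_minimal hOsub hcl')
      ⟨z0, subset_closure ⟨0, by simp⟩⟩ isClosed_closure hmin0.2.2.1).symm
  have hOR : O0 ⊆ Rπ := by
    have hRinv' : f.toEquiv '' Rπ = Rπ := hRinv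
    rintro w ⟨n, rfl⟩
    exact orbit_mem_of_invariant f.toEquiv hRinv' n z0 hz0
  refine ⟨closure O0, hmin0, huniq, ?_, ?_⟩
  · intro z hz
    exact (huniq _ (hmin z hz)).symm
  · apply Set.Subset.antisymm
    · exact closure_mono hOR
    · exact closure_minimal
        (key (closure O0) ⟨z0, subset_closure ⟨0, by simp⟩⟩ isClosed_closure hmin0.2.2.1)
        isClosed_closure
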